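/- Let W be a complex Hilbert space, j ∈ B(W, H), and let μ ∈ Z with μ real admit a factorization G_μ = j ∘ Ĝ_μ for some Ĝ_μ ∈ B(𝔥, W). Then for every λ ∈ ℝ and ε > 0 such that λ + iε ∈ Z and λ − iε ∈ Z, one has ε·‖G_{λ+iε}‖²_{B(𝔥,H)} ≤ (1/2)·(|μ − λ| + ε)·‖Ĝ_μ‖_{B(𝔥,W)}·( ‖T_{λ+iε} ∘ j‖_{B(W,𝔥)} + ‖T_{λ−iε} ∘ j‖_{B(W,𝔥)} ), and the same bound holds for ε·‖G_{λ−iε}‖²_{B(𝔥,H)}. -/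

import Mathlib

open ContinuousLinearMap

variable {H 𝔥 W : Type*}
  [NormedAddCommGroup H] [InnerProductSpace ℂ H] [CompleteSpace H]
  [NormedAddCommGroup 𝔥] [InnerProductSpace ℂ 𝔥] [CompleteSpace 𝔥]
  [NormedAddCommGroup W] [InnerProductSpace ℂ W] [CompleteSpace W]

/-- `G_z := (T_{z̄})*`. -/
noncomputable def G (T : ℂ → H →L[ℂ] 𝔥) (z : ℂ) : 𝔥 →L[ℂ] H :=
  adjoint (T ((starRingEnd ℂ) z))

lemma key_algebra (a b c η w z : ℂ) (hη : η ≠ 0) (hw : w = z - 2*η*Complex.I) :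
    η * (a + c * ((w - z)⁻¹ * (b - a)))
      = (-Complex.I * (c + (z - w)) / 2) * a + (Complex.I * c / 2) * b := by
  subst hw
  have hI : Complex.I ≠ 0 := Complex.I_ne_zero
  field_simp
  linear_combination (-4*η^2*a*Complex.I + 2*η*c*b - 2*η*a*c) * Complex.I_sq

lemma aux12
    (Z : Set ℂ)
    (R : ℂ → H →L[ℂ] H)
    (hRadj : ∀ z ∈ Z, adjoint (R z) = R ((starRingEnd ℂ) z))
    (T : ℂ → H →L[ℂ] 𝔥)
    (hT : ∀ z ∈ Z, ∀ w ∈ Z, T z - T w = (w - z) • (T w ∘L R z))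
    (j : W →L[ℂ] H) (μ : ℝ) (hμ : (μ : ℂ) ∈ Z)
    (Ghat : 𝔥 →L[ℂ] W) (hfact : G T (μ : ℂ) = j ∘L Ghat)
    (z : ℂ) (hz : z ∈ Z) (hwZ : (starRingEnd ℂ) z ∈ Z) (him : z.im ≠ 0) :
    |z.im| * ‖G T z‖ ^ 2
      ≤ (1/2) * ‖(μ:ℂ) - z‖ * ‖Ghat‖
        * (‖T z ∘L j‖ + ‖T ((starRingEnd ℂ) z) ∘L j‖) := by
  set w := (starRingEnd ℂ) z with hwdef
  set A := ‖(μ:ℂ) - z‖ with hA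
  have hAnn : 0 ≤ A := norm_nonneg _
  set K := (1/2) * A * ‖Ghat‖ * (‖T z ∘L j‖ + ‖T w ∘L j‖) with hK
  have hKnn : 0 ≤ K := by positivity
  -- Step 1: factorization of G T z
  have hGz : G T z = (j ∘L Ghat) + ((μ:ℂ) - z) • (R z ∘L (j ∘L Ghat)) := by
    have h1 := hT w hwZ (μ:ℂ) hμ
    have h2 : adjoint (T w - T ((μ:ℂ))) = adjoint ((((μ:ℂ)) - w) • (T ((μ:ℂ)) ∘L R w)) := by
      rw [h1]
    rw [map_sub, map_smulₛₗ, adjoint_comp] at h2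
    have hGzd : adjoint (T w) = G T z := rfl
    have hGmu : adjoint (T ((μ:ℂ))) = G T (μ:ℂ) := by
      rw [G, Complex.conj_ofReal]
    have hRw : adjoint (R w) = R z := by
      rw [hRadj w hwZ, hwdef, Complex.conj_conj]
    have hc : (starRingEnd ℂ) ((μ:ℂ) - w) = (μ:ℂ) - z := by
      rw [map_sub, Complex.conj_ofReal, hwdef, Complex.conj_conj]
    rw [hGzd, hGmu, hRw, hc, hfact] at h2
    linear_combination (norm := abel) h2
  have hwz : w - z ≠ 0 := sub_ne_zero.mpr (fun h => him (Complex.conj_eq_iff_im.mp h))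
  have hweq : w = z - 2*((z.im : ℝ) : ℂ)*Complex.I := by
    have h := Complex.sub_conj z
    push_cast at h
    rw [hwdef]
    linear_combination -h
  -- pointwise bound
  have hpt : ∀ v : 𝔥, |z.im| * ‖G T z v‖ ^ 2 ≤ K * ‖v‖ ^ 2 := by
    intro v
    set u := j (Ghat v) with hu
    set c := (μ:ℂ) - z with hcdef
    set a := (inner ℂ v (T w u) : ℂ) with hadef
    set b := (inner ℂ v (T z u) : ℂ) with hbdef
    have hGzv : G T z v = u + c • (R z u) := by
      rw [hGz]; rfl
    have hTRu : T w (R z u) = (w - z)⁻¹ • (T z u - T w u) := by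
      have h3 := congrFun (congrArg DFunLike.coe (hT z hz w hwZ)) u
      simp only [sub_apply, smul_apply, comp_apply, coe_sub', Pi.sub_apply, coe_smul',
        Pi.smul_apply] at h3
      rw [h3, smul_smul]
      rw [inv_mul_cancel₀ hwz, one_smul]
    have e1 : (inner ℂ (G T z v) (G T z v) : ℂ) = inner ℂ v (T w (G T z v)) :=
      adjoint_inner_left (T w) (G T z v) v
    have e2 : (inner ℂ v (T w (G T z v)) : ℂ) = a + c * ((w - z)⁻¹ * (b - a)) := by
      rw [hGzv, map_add, map_smul, hTRu, inner_add_right, inner_smul_right,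
        inner_smul_right, inner_sub_right]
    have e3 : ((z.im : ℝ) : ℂ) * (inner ℂ (G T z v) (G T z v) : ℂ)
        = (-Complex.I * (c + (z - w)) / 2) * a + (Complex.I * c / 2) * b := by
      rw [e1, e2]
      exact key_algebra a b c _ w z (Complex.ofReal_ne_zero.mpr him) hweq
    have e4 : |z.im| * ‖G T z v‖ ^ 2
        = ‖((z.im : ℝ) : ℂ) * (inner ℂ (G T z v) (G T z v) : ℂ)‖ := by
      rw [inner_self_eq_norm_sq_to_K]
      simp [norm_mul, norm_pow, Complex.norm_real, abs_norm]
    have hTwu : ‖T w u‖ ≤ ‖T w ∘L j‖ * (‖Ghat‖ * ‖v‖) := by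
      calc ‖T w u‖ = ‖(T w ∘L j) (Ghat v)‖ := rfl
        _ ≤ ‖T w ∘L j‖ * ‖Ghat v‖ := le_opNorm _ _
        _ ≤ ‖T w ∘L j‖ * (‖Ghat‖ * ‖v‖) := by
            gcongr
            exact le_opNorm _ _
    have hTzu : ‖T z u‖ ≤ ‖T z ∘L j‖ * (‖Ghat‖ * ‖v‖) := by
      calc ‖T z u‖ = ‖(T z ∘L j) (Ghat v)‖ := rfl
        _ ≤ ‖T z ∘L j‖ * ‖Ghat v‖ := le_opNorm _ _
        _ ≤ ‖T z ∘L j‖ * (‖Ghat‖ * ‖v‖) := by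
            gcongr
            exact le_opNorm _ _
    have ha : ‖a‖ ≤ ‖T w ∘L j‖ * ‖Ghat‖ * ‖v‖ ^ 2 := by
      calc ‖a‖ = ‖a‖ := rfl
        _ ≤ ‖v‖ * ‖T w u‖ := norm_inner_le_norm _ _
        _ ≤ ‖v‖ * (‖T w ∘L j‖ * (‖Ghat‖ * ‖v‖)) := by gcongr
        _ = ‖T w ∘L j‖ * ‖Ghat‖ * ‖v‖ ^ 2 := by ring
    have hb : ‖b‖ ≤ ‖T z ∘L j‖ * ‖Ghat‖ * ‖v‖ ^ 2 := by
      calc ‖b‖ = ‖b‖ := rfl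
        _ ≤ ‖v‖ * ‖T z u‖ := norm_inner_le_norm _ _
        _ ≤ ‖v‖ * (‖T z ∘L j‖ * (‖Ghat‖ * ‖v‖)) := by gcongr
        _ = ‖T z ∘L j‖ * ‖Ghat‖ * ‖v‖ ^ 2 := by ring
    have hμw : c + (z - w) = (starRingEnd ℂ) ((μ:ℂ) - z) := by
      rw [hcdef, map_sub, Complex.conj_ofReal, hwdef]
      ring
    have hc1 : ‖-Complex.I * (c + (z - w)) / 2‖ = A / 2 := by
      rw [hμw, norm_div, norm_mul, RCLike.norm_conj]
      simp [hA, hcdef]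
    have hc2 : ‖Complex.I * c / 2‖ = A / 2 := by
      rw [norm_div, norm_mul]
      simp [hA]
    calc |z.im| * ‖G T z v‖ ^ 2
        = ‖((z.im : ℝ) : ℂ) * (inner ℂ (G T z v) (G T z v) : ℂ)‖ := e4
      _ = ‖(-Complex.I * (c + (z - w)) / 2) * a + (Complex.I * c / 2) * b‖ := by
          rw [e3]
      _ ≤ ‖(-Complex.I * (c + (z - w)) / 2) * a‖
            + ‖(Complex.I * c / 2) * b‖ := norm_add_le _ _
      _ = A / 2 * ‖a‖ + A / 2 * ‖b‖ := by
          rw [norm_mul, norm_mul, hc1, hc2]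
      _ ≤ A / 2 * (‖T w ∘L j‖ * ‖Ghat‖ * ‖v‖ ^ 2)
            + A / 2 * (‖T z ∘L j‖ * ‖Ghat‖ * ‖v‖ ^ 2) := by gcongr
      _ = K * ‖v‖ ^ 2 := by rw [hK]; ring
  -- operator-norm step
  have himpos : 0 < |z.im| := abs_pos.mpr him
  set C := Real.sqrt (K / |z.im|) with hC
  have hC2 : C ^ 2 = K / |z.im| := Real.sq_sqrt (div_nonneg hKnn himpos.le)
  have hGle : ‖G T z‖ ≤ C := by
    apply opNorm_le_bound _ (Real.sqrt_nonneg _)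
    intro v
    have h1 := hpt v
    have h2 : ‖G T z v‖ ^ 2 ≤ (C * ‖v‖) ^ 2 := by
      rw [mul_pow, hC2]
      rw [div_mul_eq_mul_div, le_div_iff₀ himpos, mul_comm]
      exact h1
    have h3 := Real.sqrt_le_sqrt h2
    rwa [Real.sqrt_sq (norm_nonneg _), Real.sqrt_sq (by positivity)] at h3
  have h4 : ‖G T z‖ ^ 2 ≤ C ^ 2 := by
    apply pow_le_pow_left₀ (norm_nonneg _) hGle
  calc |z.im| * ‖G T z‖ ^ 2 ≤ |z.im| * (K / |z.im|) := by
        rw [← hC2]; exact mul_le_mul_of_nonneg_left h4 himpos.le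
    _ = K := by field_simp

/-- The estimate (eps) in the proof of Theorem 3.9 of the paper: if `G_μ` factors
through a Hilbert space `W` (the weighted space `L²_φ`) as `G_μ = j ∘ Ĝ_μ`, then
`ε ‖G_{λ±iε}‖² ≤ (1/2)(|μ−λ|+ε) ‖Ĝ_μ‖ (‖T_{λ+iε} ∘ j‖ + ‖T_{λ−iε} ∘ j‖)`. -/
theorem statement12
    (Z : Set ℂ) (hZne : Z.Nonempty) (hZconj : ∀ z ∈ Z, (starRingEnd ℂ) z ∈ Z)
    (R : ℂ → H →L[ℂ] H)
    (hRres : ∀ z ∈ Z, ∀ w ∈ Z, R z - R w = (w - z) • (R w ∘L R z))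
    (hRadj : ∀ z ∈ Z, adjoint (R z) = R ((starRingEnd ℂ) z))
    (T : ℂ → H →L[ℂ] 𝔥)
    (hT : ∀ z ∈ Z, ∀ w ∈ Z, T z - T w = (w - z) • (T w ∘L R z))
    (j : W →L[ℂ] H)
    (μ : ℝ) (hμ : (μ : ℂ) ∈ Z)
    (Ghat : 𝔥 →L[ℂ] W) (hfact : G T (μ : ℂ) = j ∘L Ghat) :
    ∀ lam : ℝ, ∀ ε : ℝ, 0 < ε →
      ((lam : ℂ) + ε * Complex.I) ∈ Z → ((lam : ℂ) - ε * Complex.I) ∈ Z →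
      (ε * ‖G T ((lam : ℂ) + ε * Complex.I)‖ ^ 2
          ≤ (1/2) * (|μ - lam| + ε) * ‖Ghat‖
            * (‖T ((lam : ℂ) + ε * Complex.I) ∘L j‖
                + ‖T ((lam : ℂ) - ε * Complex.I) ∘L j‖))
      ∧ (ε * ‖G T ((lam : ℂ) - ε * Complex.I)‖ ^ 2
          ≤ (1/2) * (|μ - lam| + ε) * ‖Ghat‖
            * (‖T ((lam : ℂ) + ε * Complex.I) ∘L j‖
                + ‖T ((lam : ℂ) - ε * Complex.I) ∘L j‖)) := by
  intro lam ε hε hzp hzm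
  set zp := (lam : ℂ) + ε * Complex.I with hzpdef
  set zm := (lam : ℂ) - ε * Complex.I with hzmdef
  have hconjp : (starRingEnd ℂ) zp = zm := by
    rw [hzpdef, hzmdef]
    simp [map_add, map_mul, Complex.conj_ofReal, Complex.conj_I]
    ring
  have hconjm : (starRingEnd ℂ) zm = zp := by
    rw [hzpdef, hzmdef]
    simp [map_sub, map_mul, Complex.conj_ofReal, Complex.conj_I]
  have himp : zp.im = ε := by simp [hzpdef]
  have himm : zm.im = -ε := by simp [hzmdef]
  have habsp : ‖(μ:ℂ) - zp‖ ≤ |μ - lam| + ε := by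
    refine le_trans (Complex.norm_le_abs_re_add_abs_im _) ?_
    simp [hzpdef, Complex.sub_re, Complex.sub_im, abs_of_pos hε]
  have habsm : ‖(μ:ℂ) - zm‖ ≤ |μ - lam| + ε := by
    refine le_trans (Complex.norm_le_abs_re_add_abs_im _) ?_
    simp [hzmdef, Complex.sub_re, Complex.sub_im, abs_of_pos hε]
  have hTnn : (0:ℝ) ≤ ‖T zp ∘L j‖ + ‖T zm ∘L j‖ := by positivity
  constructor
  · have h := aux12 Z R hRadj T hT j μ hμ Ghat hfact zp hzp
      (by rw [hconjp]; exact hzm) (by rw [himp]; exact hε.ne')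
    rw [himp, hconjp, abs_of_pos hε] at h
    calc ε * ‖G T zp‖ ^ 2
        ≤ (1/2) * ‖(μ:ℂ) - zp‖ * ‖Ghat‖ * (‖T zp ∘L j‖ + ‖T zm ∘L j‖) := h
      _ ≤ (1/2) * (|μ - lam| + ε) * ‖Ghat‖ * (‖T zp ∘L j‖ + ‖T zm ∘L j‖) := by
          gcongr
  · have h := aux12 Z R hRadj T hT j μ hμ Ghat hfact zm hzm
      (by rw [hconjm]; exact hzp) (by rw [himm]; exact (neg_ne_zero.mpr hε.ne'))
    rw [himm, hconjm, abs_neg, abs_of_pos hε] at h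
    calc ε * ‖G T zm‖ ^ 2
        ≤ (1/2) * ‖(μ:ℂ) - zm‖ * ‖Ghat‖ * (‖T zm ∘L j‖ + ‖T zp ∘L j‖) := h
      _ = (1/2) * ‖(μ:ℂ) - zm‖ * ‖Ghat‖ * (‖T zp ∘L j‖ + ‖T zm ∘L j‖) := by
          ring
      _ ≤ (1/2) * (|μ - lam| + ε) * ‖Ghat‖ * (‖T zp ∘L j‖ + ‖T zm ∘L j‖) := by
          gcongr
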